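/- arXiv:2510.18655 — 2 statements merged into one kernel-verified Lean document; each statement's English description precedes it below -/
import Mathlib

section
/- At γ₀ = √(1+√7), the third derivative of λ is strictly positive and the fourth derivative of λ is strictly negative, where λ(x) = x·√((2+x²)/(1+x²)). -/
noncomputable def lam (x : ℝ) : ℝ := x * Real.sqrt ((2 + x ^ 2) / (1 + x ^ 2))

noncomputable def gamma0 : ℝ := Real.sqrt (1 + Real.sqrt 7)

noncomputable def sfun (x : ℝ) : ℝ := Real.sqrt ((2 + x ^ 2) / (1 + x ^ 2))

lemma sfun_pos (x : ℝ) : 0 < sfun x := Real.sqrt_pos.mpr (by positivity)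

lemma sfun_sq (x : ℝ) : sfun x ^ 2 = (2 + x ^ 2) / (1 + x ^ 2) :=
  Real.sq_sqrt (by positivity)

lemma sfun_mul_self (x : ℝ) : sfun x * sfun x = (2 + x ^ 2) / (1 + x ^ 2) := by
  rw [← sq]; exact sfun_sq x

lemma hs (x : ℝ) : HasDerivAt sfun (-x / ((1 + x ^ 2) * (2 + x ^ 2)) * sfun x) x := by
  have hA : (0:ℝ) < 1 + x ^ 2 := by positivity
  have hB : (0:ℝ) < 2 + x ^ 2 := by positivity
  have h1 : HasDerivAt (fun y : ℝ => 2 + y ^ 2) (2 * x) x := by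
    simpa using (hasDerivAt_pow 2 x).const_add 2
  have h2 : HasDerivAt (fun y : ℝ => 1 + y ^ 2) (2 * x) x := by
    simpa using (hasDerivAt_pow 2 x).const_add 1
  have hq : HasDerivAt (fun y : ℝ => (2 + y ^ 2) / (1 + y ^ 2))
      ((2 * x * (1 + x ^ 2) - (2 + x ^ 2) * (2 * x)) / (1 + x ^ 2) ^ 2) x :=
    h1.div h2 (ne_of_gt hA)
  have hne : (2 + x ^ 2) / (1 + x ^ 2) ≠ 0 := by positivity
  have h := hq.sqrt hne
  convert h using 1
  · rfl
  have hsp := sfun_pos x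
  have hs2 := sfun_sq x
  rw [show Real.sqrt ((2 + x ^ 2) / (1 + x ^ 2)) = sfun x from rfl]
  rw [eq_div_iff (by positivity : 2 * sfun x ≠ 0)]
  have hs2' : sfun x ^ 2 * (1 + x ^ 2) = 2 + x ^ 2 := by
    rw [hs2]; field_simp
  field_simp
  linear_combination (-x) * hs2' 

lemma hC (x : ℝ) : HasDerivAt (fun y : ℝ => (1 + y ^ 2) * (2 + y ^ 2))
    (2 * x * (2 + x ^ 2) + (1 + x ^ 2) * (2 * x)) x := by
  have h1 : HasDerivAt (fun y : ℝ => 1 + y ^ 2) (2 * x) x := by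
    simpa using (hasDerivAt_pow 2 x).const_add 1
  have h2 : HasDerivAt (fun y : ℝ => 2 + y ^ 2) (2 * x) x := by
    simpa using (hasDerivAt_pow 2 x).const_add 2
  exact h1.mul h2

lemma step0 (x : ℝ) : HasDerivAt lam
    ((x ^ 4 + 2 * x ^ 2 + 2) * sfun x / ((1 + x ^ 2) * (2 + x ^ 2)) ^ 1) x := by
  have h : HasDerivAt (fun y : ℝ => y * sfun y)
      (1 * sfun x + x * (-x / ((1 + x ^ 2) * (2 + x ^ 2)) * sfun x)) x :=
    (hasDerivAt_id x).mul (hs x)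
  have heq : lam = fun y : ℝ => y * sfun y := rfl
  rw [heq]
  convert h using 1
  have hA : (0:ℝ) < 1 + x ^ 2 := by positivity
  have hB : (0:ℝ) < 2 + x ^ 2 := by positivity
  field_simp
  ring

lemma step1 (x : ℝ) : HasDerivAt
    (fun y : ℝ => (y ^ 4 + 2 * y ^ 2 + 2) * sfun y / ((1 + y ^ 2) * (2 + y ^ 2)) ^ 1)
    ((x ^ 5 - 2 * x ^ 3 - 6 * x) * sfun x / ((1 + x ^ 2) * (2 + x ^ 2)) ^ 2) x := by
  have hA : (0:ℝ) < 1 + x ^ 2 := by positivity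
  have hB : (0:ℝ) < 2 + x ^ 2 := by positivity
  have hP : HasDerivAt (fun y : ℝ => y ^ 4 + 2 * y ^ 2 + 2) (4 * x ^ 3 + 2 * (2 * x)) x := by
    have h4 : HasDerivAt (fun y : ℝ => y ^ 4) (4 * x ^ 3) x := by simpa using hasDerivAt_pow 4 x
    have h2 : HasDerivAt (fun y : ℝ => y ^ 2) (2 * x) x := by simpa using hasDerivAt_pow 2 x
    exact (h4.add (h2.const_mul 2)).add_const 2
  have h := (hP.fun_mul (hs x)).fun_div ((hC x).fun_pow 1) (by positivity)
  convert h using 1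
  · rfl
  · rfl
  field_simp
  ring

lemma step2 (x : ℝ) : HasDerivAt
    (fun y : ℝ => (y ^ 5 - 2 * y ^ 3 - 6 * y) * sfun y / ((1 + y ^ 2) * (2 + y ^ 2)) ^ 2)
    ((-3 * x ^ 8 + 12 * x ^ 6 + 60 * x ^ 4 + 48 * x ^ 2 - 12) * sfun x
      / ((1 + x ^ 2) * (2 + x ^ 2)) ^ 3) x := by
  have hA : (0:ℝ) < 1 + x ^ 2 := by positivity
  have hB : (0:ℝ) < 2 + x ^ 2 := by positivity
  have hP : HasDerivAt (fun y : ℝ => y ^ 5 - 2 * y ^ 3 - 6 * y)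
      (5 * x ^ 4 - 2 * (3 * x ^ 2) - 6 * 1) x := by
    have h5 : HasDerivAt (fun y : ℝ => y ^ 5) (5 * x ^ 4) x := by simpa using hasDerivAt_pow 5 x
    have h3 : HasDerivAt (fun y : ℝ => y ^ 3) (3 * x ^ 2) x := by simpa using hasDerivAt_pow 3 x
    have h1 : HasDerivAt (fun y : ℝ => y) 1 x := hasDerivAt_id x
    exact (h5.sub (h3.const_mul 2)).sub (h1.const_mul 6)
  have h := (hP.fun_mul (hs x)).fun_div ((hC x).fun_pow 2) (by positivity)
  convert h using 1
  · rfl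
  · rfl
  field_simp
  ring

lemma step3 (x : ℝ) : HasDerivAt
    (fun y : ℝ => (-3 * y ^ 8 + 12 * y ^ 6 + 60 * y ^ 4 + 48 * y ^ 2 - 12) * sfun y
      / ((1 + y ^ 2) * (2 + y ^ 2)) ^ 3)
    ((12 * x ^ 11 - 87 * x ^ 9 - 540 * x ^ 7 - 756 * x ^ 5 + 420 * x) * sfun x
      / ((1 + x ^ 2) * (2 + x ^ 2)) ^ 4) x := by
  have hA : (0:ℝ) < 1 + x ^ 2 := by positivity
  have hB : (0:ℝ) < 2 + x ^ 2 := by positivity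
  have hP : HasDerivAt (fun y : ℝ => -3 * y ^ 8 + 12 * y ^ 6 + 60 * y ^ 4 + 48 * y ^ 2 - 12)
      (-3 * (8 * x ^ 7) + 12 * (6 * x ^ 5) + 60 * (4 * x ^ 3) + 48 * (2 * x)) x := by
    have h8 : HasDerivAt (fun y : ℝ => y ^ 8) (8 * x ^ 7) x := by simpa using hasDerivAt_pow 8 x
    have h6 : HasDerivAt (fun y : ℝ => y ^ 6) (6 * x ^ 5) x := by simpa using hasDerivAt_pow 6 x
    have h4 : HasDerivAt (fun y : ℝ => y ^ 4) (4 * x ^ 3) x := by simpa using hasDerivAt_pow 4 x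
    have h2 : HasDerivAt (fun y : ℝ => y ^ 2) (2 * x) x := by simpa using hasDerivAt_pow 2 x
    exact ((((h8.const_mul (-3)).add (h6.const_mul 12)).add (h4.const_mul 60)).add
      (h2.const_mul 48)).sub_const 12
  have h := (hP.fun_mul (hs x)).fun_div ((hC x).fun_pow 3) (by positivity)
  convert h using 1
  · rfl
  · rfl
  field_simp
  ring

lemma deriv3 : deriv (deriv (deriv lam)) = fun x : ℝ =>
    (-3 * x ^ 8 + 12 * x ^ 6 + 60 * x ^ 4 + 48 * x ^ 2 - 12) * sfun x
      / ((1 + x ^ 2) * (2 + x ^ 2)) ^ 3 := by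
  have h1 : deriv lam = fun x : ℝ =>
      (x ^ 4 + 2 * x ^ 2 + 2) * sfun x / ((1 + x ^ 2) * (2 + x ^ 2)) ^ 1 :=
    funext fun x => (step0 x).deriv
  rw [h1]
  have h2 : deriv (fun x : ℝ =>
      (x ^ 4 + 2 * x ^ 2 + 2) * sfun x / ((1 + x ^ 2) * (2 + x ^ 2)) ^ 1) = fun x : ℝ =>
      (x ^ 5 - 2 * x ^ 3 - 6 * x) * sfun x / ((1 + x ^ 2) * (2 + x ^ 2)) ^ 2 :=
    funext fun x => (step1 x).deriv
  rw [h2]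
  exact funext fun x => (step2 x).deriv

theorem stmt_6 :
    0 < iteratedDeriv 3 lam gamma0 ∧ iteratedDeriv 4 lam gamma0 < 0 := by
  have hiter3 : iteratedDeriv 3 lam = deriv (deriv (deriv lam)) := by
    simp [iteratedDeriv_succ, iteratedDeriv_zero]
  have hiter4 : iteratedDeriv 4 lam = deriv (deriv (deriv (deriv lam))) := by
    simp [iteratedDeriv_succ, iteratedDeriv_zero]
  have e3 : iteratedDeriv 3 lam gamma0 =
      (-3 * gamma0 ^ 8 + 12 * gamma0 ^ 6 + 60 * gamma0 ^ 4 + 48 * gamma0 ^ 2 - 12) * sfun gamma0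
        / ((1 + gamma0 ^ 2) * (2 + gamma0 ^ 2)) ^ 3 := by
    rw [hiter3, deriv3]
  have e4 : iteratedDeriv 4 lam gamma0 =
      (12 * gamma0 ^ 11 - 87 * gamma0 ^ 9 - 540 * gamma0 ^ 7 - 756 * gamma0 ^ 5 + 420 * gamma0)
        * sfun gamma0 / ((1 + gamma0 ^ 2) * (2 + gamma0 ^ 2)) ^ 4 := by
    rw [hiter4, deriv3]
    exact (step3 gamma0).deriv
  have hw : (0:ℝ) ≤ Real.sqrt 7 := Real.sqrt_nonneg 7
  have h7 : Real.sqrt 7 ^ 2 = 7 := Real.sq_sqrt (by norm_num)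
  have hg2 : gamma0 ^ 2 = 1 + Real.sqrt 7 := Real.sq_sqrt (by positivity)
  have hgpos : 0 < gamma0 := Real.sqrt_pos.mpr (by positivity)
  set w := Real.sqrt 7 with hwdef
  have h4p : gamma0 ^ 4 = 8 + 2 * w := by
    linear_combination (gamma0 ^ 2 + 1 + w) * hg2 + h7
  have h6p : gamma0 ^ 6 = 22 + 10 * w := by
    linear_combination (gamma0 ^ 4 + (1 + w) * gamma0 ^ 2 + (1 + w) ^ 2) * hg2 + (3 + w) * h7
  have h8p : gamma0 ^ 8 = 92 + 32 * w := by
    linear_combination (gamma0 ^ 4 + 8 + 2 * w) * h4p + 4 * h7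
  have h10p : gamma0 ^ 10 = 316 + 124 * w := by
    linear_combination gamma0 ^ 2 * h8p + (92 + 32 * w) * hg2 + 32 * h7
  constructor
  · rw [e3]
    apply div_pos
    · apply mul_pos _ (sfun_pos _)
      linarith [h8p, h6p, h4p, hg2, hw]
    · positivity
  · rw [e4]
    apply div_neg_of_neg_of_pos
    · apply mul_neg_of_neg_of_pos _ (sfun_pos _)
      have hrw : 12 * gamma0 ^ 11 - 87 * gamma0 ^ 9 - 540 * gamma0 ^ 7 - 756 * gamma0 ^ 5
          + 420 * gamma0 = gamma0 * (12 * gamma0 ^ 10 - 87 * gamma0 ^ 8 - 540 * gamma0 ^ 6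
          - 756 * gamma0 ^ 4 + 420) := by ring
      rw [hrw]
      apply mul_neg_of_pos_of_neg hgpos
      linarith [h10p, h8p, h6p, h4p, hw]
    · positivity
end

section
/- There exist δ₀ > 0 and constants 0 < c ≤ C such that: for all x, y with γ₀ - δ₀ < x, y ≤ γ₀ (or γ₀ ≤ x, y < γ₀ + δ₀), one has c·|x-y|·max(|x-γ₀|,|y-γ₀|) ≤ |λ'(x) - λ'(y)| ≤ C·|x-y|·max(|x-γ₀|,|y-γ₀|), where λ(x) = x·√((2+x²)/(1+x²)) and γ₀ = √(1+√7). -/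
noncomputable def Sf (x : ℝ) : ℝ := Real.sqrt ((1 + x ^ 2) * (2 + x ^ 2))

noncomputable def phi (x : ℝ) : ℝ := (x ^ 4 + 2 * x ^ 2 + 2) / ((1 + x ^ 2) * Sf x)

noncomputable def gfun (x : ℝ) : ℝ :=
  x * (x + gamma0) * (x ^ 2 + (Real.sqrt 7 - 1)) / ((1 + x ^ 2) ^ 2 * (2 + x ^ 2) * Sf x)

lemma sqrt7_lb : (2:ℝ) < Real.sqrt 7 := by
  nlinarith [Real.sq_sqrt (show (0:ℝ) ≤ 7 by norm_num), Real.sqrt_nonneg 7]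

lemma sqrt7_ub : Real.sqrt 7 < 3 := by
  nlinarith [Real.sq_sqrt (by norm_num : (7:ℝ) ≥ 0), Real.sqrt_nonneg 7, Real.sqrt_lt_sqrt (by norm_num : (7:ℝ) ≥ 0) (by norm_num : (7:ℝ) < 9)]

lemma gamma0_sq : gamma0 ^ 2 = 1 + Real.sqrt 7 := by
  have : (0:ℝ) ≤ 1 + Real.sqrt 7 := by positivity
  simpa [gamma0] using Real.sq_sqrt this

lemma gamma0_lb : (3/2 : ℝ) < gamma0 := by
  have h7 := sqrt7_lb
  have h := gamma0_sq
  have h0 : (0:ℝ) ≤ gamma0 := by rw [gamma0]; positivity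
  nlinarith

lemma gamma0_ub : gamma0 < 2 := by
  have h7 := sqrt7_ub
  have h := gamma0_sq
  have h0 : (0:ℝ) ≤ gamma0 := by rw [gamma0]; positivity
  nlinarith

lemma Sf_pos (x : ℝ) : 0 < Sf x := Real.sqrt_pos.mpr (by positivity)

lemma Sf_sq (x : ℝ) : Sf x ^ 2 = (1 + x ^ 2) * (2 + x ^ 2) := by
  rw [Sf, Real.sq_sqrt]; positivity

lemma lam_eq : lam = fun x => x * Sf x / (1 + x ^ 2) := by
  funext x
  have hA : (0:ℝ) < 1 + x ^ 2 := by positivity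
  have hB : (0:ℝ) ≤ 2 + x ^ 2 := by positivity
  have hsA : Real.sqrt (1 + x ^ 2) ^ 2 = 1 + x ^ 2 := Real.sq_sqrt hA.le
  have hsA0 : 0 < Real.sqrt (1 + x ^ 2) := Real.sqrt_pos.mpr hA
  rw [lam, Sf, Real.sqrt_div hB, Real.sqrt_mul hA.le]
  rw [eq_div_iff hA.ne']
  field_simp
  linear_combination (-x) * hsA

lemma Sf_hasDeriv (x : ℝ) : HasDerivAt Sf (x * (3 + 2 * x ^ 2) / Sf x) x := by
  have h : HasDerivAt (fun y : ℝ => (1 + y ^ 2) * (2 + y ^ 2))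
      (2 * x ^ 1 * (2 + x ^ 2) + (1 + x ^ 2) * (2 * x ^ 1)) x :=
    ((hasDerivAt_pow 2 x).const_add 1).mul ((hasDerivAt_pow 2 x).const_add 2)
  have h2 := h.sqrt (by positivity)
  refine h2.congr_deriv (Eq.symm ?_)
  rw [Sf]
  ring

lemma lam_hasDeriv (x : ℝ) : HasDerivAt lam (phi x) x := by
  rw [lam_eq]
  have hA : (0:ℝ) < 1 + x ^ 2 := by positivity
  have hS0 := Sf_pos x
  have hS2 := Sf_sq x
  have h1 : HasDerivAt (fun y : ℝ => y * Sf y) (1 * Sf x + x * (x * (3 + 2 * x ^ 2) / Sf x)) x :=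
    (hasDerivAt_id x).mul (Sf_hasDeriv x)
  have h2 : HasDerivAt (fun y : ℝ => 1 + y ^ 2) (2 * x ^ 1) x := (hasDerivAt_pow 2 x).const_add 1
  have h3 := h1.div h2 hA.ne'
  refine h3.congr_deriv (Eq.symm ?_)
  rw [phi]
  field_simp
  linear_combination (x ^ 2 - 1) * hS2

lemma gfun_eq (x : ℝ) : gfun x * (x - gamma0) =
    x * (x ^ 4 - 2 * x ^ 2 - 6) / ((1 + x ^ 2) ^ 2 * (2 + x ^ 2) * Sf x) := by
  have h7 : Real.sqrt 7 ^ 2 = 7 := Real.sq_sqrt (by norm_num)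
  rw [gfun, div_mul_eq_mul_div]
  congr 1
  linear_combination (-(x * (x ^ 2 + Real.sqrt 7 - 1))) * gamma0_sq + (-x) * h7

lemma phi_hasDeriv (x : ℝ) : HasDerivAt phi (gfun x * (x - gamma0)) x := by
  have hA : (0:ℝ) < 1 + x ^ 2 := by positivity
  have hS0 := Sf_pos x
  have hS2 := Sf_sq x
  have h1 : HasDerivAt (fun y : ℝ => y ^ 4 + 2 * y ^ 2 + 2) (4 * x ^ 3 + 2 * (2 * x ^ 1)) x :=
    ((hasDerivAt_pow 4 x).add ((hasDerivAt_pow 2 x).const_mul 2)).add_const 2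
  have h2 : HasDerivAt (fun y : ℝ => (1 + y ^ 2) * Sf y)
      (2 * x ^ 1 * Sf x + (1 + x ^ 2) * (x * (3 + 2 * x ^ 2) / Sf x)) x :=
    ((hasDerivAt_pow 2 x).const_add 1).mul (Sf_hasDeriv x)
  have h3 := h1.div h2 (by positivity)
  refine h3.congr_deriv (Eq.symm ?_)
  rw [gfun_eq]
  field_simp
  linear_combination (x * (x ^ 4 - 2 * x ^ 2 - 6 - 2 * x ^ 2 * (x ^ 2 + 2) ^ 2)) * hS2

lemma gfun_lb (t : ℝ) (h1 : 1 ≤ t) (h2 : t ≤ 5/2) : 1/1000 ≤ gfun t := by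
  have hγl := gamma0_lb; have hγu := gamma0_ub
  have hrl := sqrt7_lb; have hru := sqrt7_ub
  have hS2 := Sf_sq t; have hS0 := Sf_pos t
  have ht1 : (1:ℝ) ≤ t ^ 2 := by nlinarith
  have ht2 : t ^ 2 ≤ 25/4 := by nlinarith
  have hSu : Sf t ≤ 8 := by nlinarith [mul_nonneg (by linarith : (0:ℝ) ≤ 25/4 - t^2) (sq_nonneg t)]
  have hD : 0 < (1 + t ^ 2) ^ 2 * (2 + t ^ 2) * Sf t := by positivity
  have hA2 : (1 + t ^ 2) ^ 2 ≤ 841/16 := by nlinarith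
  have hB : (2 + t ^ 2) ≤ 33/4 := by nlinarith
  have q1 : (1 + t ^ 2) ^ 2 * (2 + t ^ 2) ≤ 841/16 * (33/4) :=
    mul_le_mul hA2 hB (by positivity) (by norm_num)
  have q2 : (1 + t ^ 2) ^ 2 * (2 + t ^ 2) * Sf t ≤ 841/16 * (33/4) * 8 :=
    mul_le_mul q1 hSu hS0.le (by norm_num)
  have e1 : (5/2 : ℝ) ≤ t + gamma0 := by linarith
  have e2 : (2 : ℝ) ≤ t ^ 2 + (Real.sqrt 7 - 1) := by nlinarith
  have p1 : (5/2 : ℝ) ≤ t * (t + gamma0) := by nlinarith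
  have p2 : (5 : ℝ) ≤ t * (t + gamma0) * (t ^ 2 + (Real.sqrt 7 - 1)) := by
    have := mul_le_mul p1 e2 (by norm_num) (by nlinarith)
    linarith
  rw [gfun, le_div_iff₀ hD]
  linarith

lemma gfun_ub (t : ℝ) (h1 : 1 ≤ t) (h2 : t ≤ 5/2) : gfun t ≤ 4 := by
  have hγl := gamma0_lb; have hγu := gamma0_ub
  have hrl := sqrt7_lb; have hru := sqrt7_ub
  have hS2 := Sf_sq t; have hS0 := Sf_pos t
  have ht1 : (1:ℝ) ≤ t ^ 2 := by nlinarith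
  have ht2 : t ^ 2 ≤ 25/4 := by nlinarith
  have hSl : 2 ≤ Sf t := by nlinarith
  have hD : 0 < (1 + t ^ 2) ^ 2 * (2 + t ^ 2) * Sf t := by positivity
  have hA2 : (4:ℝ) ≤ (1 + t ^ 2) ^ 2 := by nlinarith
  have hB : (3:ℝ) ≤ (2 + t ^ 2) := by nlinarith
  have q1 : (4:ℝ) * 3 ≤ (1 + t ^ 2) ^ 2 * (2 + t ^ 2) :=
    mul_le_mul hA2 hB (by norm_num) (by positivity)
  have q2 : (4:ℝ) * 3 * 2 ≤ (1 + t ^ 2) ^ 2 * (2 + t ^ 2) * Sf t :=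
    mul_le_mul q1 hSl (by norm_num) (by positivity)
  have e2 : t ^ 2 + (Real.sqrt 7 - 1) ≤ 33/4 := by nlinarith
  have p1 : t * (t + gamma0) ≤ 45/4 := by nlinarith
  have p2 : t * (t + gamma0) * (t ^ 2 + (Real.sqrt 7 - 1)) ≤ 45/4 * (33/4) := by
    have := mul_le_mul p1 e2 (by nlinarith) (by norm_num)
    linarith
  rw [gfun, div_le_iff₀ hD]
  linarith

lemma hasDerivF (c t : ℝ) :
    HasDerivAt (fun y => phi y - c * (y - gamma0) ^ 2) ((gfun t - 2 * c) * (t - gamma0)) t := by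
  have h := (phi_hasDeriv t).sub ((((hasDerivAt_id t).sub_const gamma0).pow 2).const_mul c)
  refine h.congr_deriv (Eq.symm ?_)
  simp only [id_eq]
  ring

lemma hasDerivG (c t : ℝ) :
    HasDerivAt (fun y => c * (y - gamma0) ^ 2 - phi y) ((2 * c - gfun t) * (t - gamma0)) t := by
  have h := ((((hasDerivAt_id t).sub_const gamma0).pow 2).const_mul c).sub (phi_hasDeriv t)
  refine h.congr_deriv (Eq.symm ?_)
  simp only [id_eq]
  ring

lemma in_window {t : ℝ} (h1 : gamma0 - 1/2 ≤ t) (h2 : t ≤ gamma0 + 1/2) :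
    1 ≤ t ∧ t ≤ 5/2 := by
  have := gamma0_lb; have := gamma0_ub
  constructor <;> linarith

lemma monoF_right : MonotoneOn (fun y => phi y - (1/2000) * (y - gamma0) ^ 2)
    (Set.Icc gamma0 (gamma0 + 1/2)) := by
  have hd : Differentiable ℝ (fun y => phi y - (1/2000) * (y - gamma0) ^ 2) :=
    fun t => (hasDerivF (1/2000) t).differentiableAt
  apply monotoneOn_of_deriv_nonneg (convex_Icc _ _) hd.continuous.continuousOn
    hd.differentiableOn
  intro t ht
  rw [interior_Icc] at ht
  rw [(hasDerivF (1/2000) t).deriv]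
  obtain ⟨w1, w2⟩ := in_window (t := t) (by linarith [ht.1]) (by linarith [ht.2])
  have := gfun_lb t w1 w2
  have : (0:ℝ) ≤ gfun t - 2 * (1/2000) := by linarith
  exact mul_nonneg this (by linarith [ht.1])

lemma monoG_right : MonotoneOn (fun y => 2 * (y - gamma0) ^ 2 - phi y)
    (Set.Icc gamma0 (gamma0 + 1/2)) := by
  have hd : Differentiable ℝ (fun y => 2 * (y - gamma0) ^ 2 - phi y) :=
    fun t => (hasDerivG 2 t).differentiableAt
  apply monotoneOn_of_deriv_nonneg (convex_Icc _ _) hd.continuous.continuousOn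
    hd.differentiableOn
  intro t ht
  rw [interior_Icc] at ht
  rw [(hasDerivG 2 t).deriv]
  obtain ⟨w1, w2⟩ := in_window (t := t) (by linarith [ht.1]) (by linarith [ht.2])
  have := gfun_ub t w1 w2
  exact mul_nonneg (by linarith) (by linarith [ht.1])

lemma antiF_left : AntitoneOn (fun y => phi y - (1/2000) * (y - gamma0) ^ 2)
    (Set.Icc (gamma0 - 1/2) gamma0) := by
  have hd : Differentiable ℝ (fun y => phi y - (1/2000) * (y - gamma0) ^ 2) :=
    fun t => (hasDerivF (1/2000) t).differentiableAt
  apply antitoneOn_of_deriv_nonpos (convex_Icc _ _) hd.continuous.continuousOn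
    hd.differentiableOn
  intro t ht
  rw [interior_Icc] at ht
  rw [(hasDerivF (1/2000) t).deriv]
  obtain ⟨w1, w2⟩ := in_window (t := t) (by linarith [ht.1]) (by linarith [ht.2])
  have := gfun_lb t w1 w2
  exact mul_nonpos_of_nonneg_of_nonpos (by linarith) (by linarith [ht.2])

lemma antiG_left : AntitoneOn (fun y => 2 * (y - gamma0) ^ 2 - phi y)
    (Set.Icc (gamma0 - 1/2) gamma0) := by
  have hd : Differentiable ℝ (fun y => 2 * (y - gamma0) ^ 2 - phi y) :=
    fun t => (hasDerivG 2 t).differentiableAt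
  apply antitoneOn_of_deriv_nonpos (convex_Icc _ _) hd.continuous.continuousOn
    hd.differentiableOn
  intro t ht
  rw [interior_Icc] at ht
  rw [(hasDerivG 2 t).deriv]
  obtain ⟨w1, w2⟩ := in_window (t := t) (by linarith [ht.1]) (by linarith [ht.2])
  have := gfun_ub t w1 w2
  exact mul_nonpos_of_nonneg_of_nonpos (by linarith) (by linarith [ht.2])

lemma key (x y : ℝ) (hxy : x ≤ y)
    (h : (gamma0 - 1/2 < x ∧ x ≤ gamma0 ∧ gamma0 - 1/2 < y ∧ y ≤ gamma0) ∨
         (gamma0 ≤ x ∧ x < gamma0 + 1/2 ∧ gamma0 ≤ y ∧ y < gamma0 + 1/2)) :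
    1/4000 * |x - y| * max |x - gamma0| |y - gamma0| ≤ |phi x - phi y| ∧
    |phi x - phi y| ≤ 4 * |x - y| * max |x - gamma0| |y - gamma0| := by
  rcases h with ⟨hx1, hx2, hy1, hy2⟩ | ⟨hx1, hx2, hy1, hy2⟩
  · -- left side: x ≤ y ≤ gamma0, max = gamma0 - x
    have hmx : |x - gamma0| = gamma0 - x := by rw [abs_sub_comm]; exact abs_of_nonneg (by linarith)
    have hmy : |y - gamma0| = gamma0 - y := by rw [abs_sub_comm]; exact abs_of_nonneg (by linarith)
    have hmax : max |x - gamma0| |y - gamma0| = gamma0 - x := by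
      rw [hmx, hmy]; exact max_eq_left (by linarith)
    have habs : |x - y| = y - x := by rw [abs_sub_comm]; exact abs_of_nonneg (by linarith)
    have hxI : x ∈ Set.Icc (gamma0 - 1/2) gamma0 := ⟨by linarith, hx2⟩
    have hyI : y ∈ Set.Icc (gamma0 - 1/2) gamma0 := ⟨by linarith, hy2⟩
    have hF := antiF_left hxI hyI hxy
    have hG := antiG_left hxI hyI hxy
    simp only at hF hG
    have hlow : 1/2000 * ((x - gamma0) ^ 2 - (y - gamma0) ^ 2) ≤ phi x - phi y := by linarith
    have hhigh : phi x - phi y ≤ 2 * ((x - gamma0) ^ 2 - (y - gamma0) ^ 2) := by linarith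
    have hsq : (0:ℝ) ≤ (x - gamma0) ^ 2 - (y - gamma0) ^ 2 := by nlinarith
    have hpos : 0 ≤ phi x - phi y := by linarith
    have habsphi : |phi x - phi y| = phi x - phi y := abs_of_nonneg hpos
    rw [habsphi, hmax, habs]
    constructor
    · nlinarith
    · nlinarith
  · -- right side: gamma0 ≤ x ≤ y, max = y - gamma0
    have hmx : |x - gamma0| = x - gamma0 := abs_of_nonneg (by linarith)
    have hmy : |y - gamma0| = y - gamma0 := abs_of_nonneg (by linarith)
    have hmax : max |x - gamma0| |y - gamma0| = y - gamma0 := by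
      rw [hmx, hmy]; exact max_eq_right (by linarith)
    have habs : |x - y| = y - x := by rw [abs_sub_comm]; exact abs_of_nonneg (by linarith)
    have hxI : x ∈ Set.Icc gamma0 (gamma0 + 1/2) := ⟨hx1, by linarith⟩
    have hyI : y ∈ Set.Icc gamma0 (gamma0 + 1/2) := ⟨hy1, by linarith⟩
    have hF := monoF_right hxI hyI hxy
    have hG := monoG_right hxI hyI hxy
    simp only at hF hG
    have hlow : 1/2000 * ((y - gamma0) ^ 2 - (x - gamma0) ^ 2) ≤ phi y - phi x := by linarith
    have hhigh : phi y - phi x ≤ 2 * ((y - gamma0) ^ 2 - (x - gamma0) ^ 2) := by linarith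
    have hsq : (0:ℝ) ≤ (y - gamma0) ^ 2 - (x - gamma0) ^ 2 := by nlinarith
    have hpos : 0 ≤ phi y - phi x := by linarith
    have habsphi : |phi x - phi y| = phi y - phi x := by
      rw [abs_sub_comm]; exact abs_of_nonneg hpos
    rw [habsphi, hmax, habs]
    constructor
    · nlinarith
    · nlinarith

theorem stmt_9 : ∃ δ₀ c C : ℝ, 0 < δ₀ ∧ 0 < c ∧ c ≤ C ∧
    ∀ x y : ℝ,
      ((gamma0 - δ₀ < x ∧ x ≤ gamma0 ∧ gamma0 - δ₀ < y ∧ y ≤ gamma0) ∨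
       (gamma0 ≤ x ∧ x < gamma0 + δ₀ ∧ gamma0 ≤ y ∧ y < gamma0 + δ₀)) →
      c * |x - y| * max |x - gamma0| |y - gamma0| ≤ |deriv lam x - deriv lam y| ∧
      |deriv lam x - deriv lam y| ≤ C * |x - y| * max |x - gamma0| |y - gamma0| := by
  refine ⟨1/2, 1/4000, 4, by norm_num, by norm_num, by norm_num, fun x y h => ?_⟩
  have hdx : deriv lam x = phi x := (lam_hasDeriv x).deriv
  have hdy : deriv lam y = phi y := (lam_hasDeriv y).deriv
  rw [hdx, hdy]
  rcases le_total x y with hxy | hxy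
  · exact key x y hxy h
  · have h' : (gamma0 - 1/2 < y ∧ y ≤ gamma0 ∧ gamma0 - 1/2 < x ∧ x ≤ gamma0) ∨
        (gamma0 ≤ y ∧ y < gamma0 + 1/2 ∧ gamma0 ≤ x ∧ x < gamma0 + 1/2) := by tauto
    have := key y x hxy h'
    rw [abs_sub_comm y x, abs_sub_comm (phi y) (phi x), max_comm] at this
    exact this
end
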